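/- arXiv:1410.1700 — 2 statements merged into one kernel-verified Lean document; each statement's English description precedes it below -/
import Mathlib

section
/- For every t ∈ ℝ, the matrix exponential of t·Y_a, where Y_a = [[0,0,0],[0,0,−1],[0,−1,0]], equals [[1,0,0],[0,cosh t, −sinh t],[0,−sinh t, cosh t]]. -/
open Matrix

/-- The element `Y_a` of `so(2,1)`. -/
def Ya : Matrix (Fin 3) (Fin 3) ℝ := !![0,0,0; 0,0,-1; 0,-1,0]

noncomputable def U : Matrix (Fin 3) (Fin 3) ℝ := !![1,0,0; 0,1,1; 0,1,-1]
noncomputable def V : Matrix (Fin 3) (Fin 3) ℝ := !![1,0,0; 0,1/2,1/2; 0,1/2,-1/2]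

noncomputable instance : Invertible U := by
  apply invertibleOfRightInverse U V
  ext i j
  fin_cases i <;> fin_cases j <;> simp [U, V, Matrix.vecHead, Matrix.vecTail, Matrix.mul_apply, Fin.sum_univ_succ] <;> norm_num

/-- `exp(t Y_a) = [[1,0,0],[0,cosh t,−sinh t],[0,−sinh t,cosh t]]`. -/
theorem exp_tYa (t : ℝ) :
    NormedSpace.exp (t • Ya) =
      !![1, 0, 0;
         0, Real.cosh t, -Real.sinh t;
         0, -Real.sinh t, Real.cosh t] := by
  have hUV : U⁻¹ = V := by
    rw [Matrix.inv_eq_right_inv]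
    ext i j
    fin_cases i <;> fin_cases j <;> simp [U, V, Matrix.vecHead, Matrix.vecTail, Matrix.mul_apply, Fin.sum_univ_succ] <;> norm_num
  have hd : t • Ya = U * diagonal ![0, -t, t] * U⁻¹ := by
    rw [hUV]
    ext i j
    fin_cases i <;> fin_cases j <;>
      simp [U, V, Ya, Matrix.vecHead, Matrix.vecTail, Matrix.mul_apply, Fin.sum_univ_succ, diagonal] <;> ring
  rw [hd, Matrix.exp_conj U _ (isUnit_of_invertible U), Matrix.exp_diagonal, hUV]
  have hexp : NormedSpace.exp ![(0:ℝ), -t, t] = ![1, Real.exp (-t), Real.exp t] := by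
    ext i
    fin_cases i <;>
      simp [Pi.coe_exp, ← Real.exp_eq_exp_ℝ]
  rw [hexp]
  ext i j
  fin_cases i <;> fin_cases j <;>
    simp [U, V, Matrix.vecHead, Matrix.vecTail, Matrix.mul_apply, Fin.sum_univ_succ, diagonal, Real.cosh_eq, Real.sinh_eq] <;>
    ring
end

section
/- Let g(t,s) be the isometry of ℝ³ given by g(t,s)(p) = a(t)p + (λt, s, −s)ᵀ, where a(t) = [[1,0,0],[0,cosh t,−sinh t],[0,−sinh t,cosh t]] and λ > 0 is fixed. Then in the null coordinates p = x e₁ + y(e₂−e₃) + z(e₂+e₃), one has g(t,s)(p) = (x+λt)e₁ + (s + e^t y)(e₂−e₃) + e^{−t} z (e₂+e₃). Consequently, every point of ℝ³ lies in the orbit of some point z(e₂+e₃) with z ∈ ℝ, and g(t,s)(z(e₂+e₃)) ∈ ℝ(e₂+e₃) implies (t,s) = (0,0) when applied at a point with z arbitrary; thus the line ℝ(e₂+e₃) meets every orbit of the group {g(t,s)} exactly once. -/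
open Matrix

/-- The matrix `a(t)`. -/
noncomputable def aMat (t : ℝ) : Matrix (Fin 3) (Fin 3) ℝ :=
  !![1, 0, 0;
     0, Real.cosh t, -Real.sinh t;
     0, -Real.sinh t, Real.cosh t]

/-- The isometry `g(t,s)(p) = a(t)p + (λt, s, −s)ᵀ` of `A_λ ⋉ ℓ`. -/
noncomputable def gIso (lam t s : ℝ) (p : Fin 3 → ℝ) : Fin 3 → ℝ :=
  aMat t *ᵥ p + ![lam * t, s, -s]

/-- in null coordinates `p = x e₁ + y(e₂−e₃) + z(e₂+e₃)` one has
`g(t,s)(p) = (x+λt)e₁ + (s + eᵗy)(e₂−e₃) + e⁻ᵗz(e₂+e₃)`; every point lies in the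
orbit of some `z(e₂+e₃)`; and `g(t,s)(z(e₂+e₃)) ∈ ℝ(e₂+e₃)` forces `(t,s) = (0,0)`.
Thus `ℝ(e₂+e₃)` meets every orbit of `{g(t,s)}` exactly once. -/
theorem Alambda_orbits (lam : ℝ) (hlam : 0 < lam) :
    (∀ t s x y z : ℝ,
      gIso lam t s (x • ![(1:ℝ),0,0] + y • ![(0:ℝ),1,-1] + z • ![(0:ℝ),1,1]) =
        (x + lam * t) • ![(1:ℝ),0,0] + (s + Real.exp t * y) • ![(0:ℝ),1,-1]
          + (Real.exp (-t) * z) • ![(0:ℝ),1,1]) ∧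
    (∀ p : Fin 3 → ℝ, ∃ t s z : ℝ, p = gIso lam t s (z • ![(0:ℝ),1,1])) ∧
    (∀ t s z : ℝ,
      (∃ c : ℝ, gIso lam t s (z • ![(0:ℝ),1,1]) = c • ![(0:ℝ),1,1]) →
        t = 0 ∧ s = 0) := by
  have key : ∀ t s z : ℝ, gIso lam t s (z • ![(0:ℝ),1,1]) =
      ![lam * t, s + Real.exp (-t) * z, -s + Real.exp (-t) * z] := by
    intro t s z
    funext i
    fin_cases i <;>
      simp [gIso, aMat, mulVec, dotProduct, Fin.sum_univ_three, Real.cosh_eq,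
        Real.sinh_eq, Real.exp_neg] <;>
    · field_simp
      ring
  refine ⟨?_, ?_, ?_⟩
  · intro t s x y z
    funext i
    fin_cases i <;>
      simp [gIso, aMat, mulVec, dotProduct, Fin.sum_univ_three, Real.cosh_eq,
        Real.sinh_eq, Real.exp_neg] <;>
    · field_simp
      ring
  · intro p
    refine ⟨p 0 / lam, (p 1 - p 2) / 2, Real.exp (p 0 / lam) * ((p 1 + p 2) / 2), ?_⟩
    rw [key]
    funext i
    fin_cases i <;>
      simp [Real.exp_neg] <;> field_simp <;> ring
  · intro t s z ⟨c, hc⟩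
    rw [key] at hc
    have h0 := congrFun hc 0
    have h1 := congrFun hc 1
    have h2 := congrFun hc 2
    simp at h0 h1 h2
    have ht : t = 0 := by
      rcases h0 with h | h
      · exact absurd h hlam.ne'
      · exact h
    subst ht
    constructor
    · rfl
    · simp at h1 h2
      linarith
end
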